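/- Define f : ℝ → ℝ by f(x) = 1 if x ∈ ⋃_{k∈ℤ} [kπ, kπ + a_k] and f(x) = 0 otherwise, where a₀ = 1/4 and a_k = 1/(5|k|) for k ≠ 0. Then ∫_ℝ |f(x) − f(x + π)|² dx ≤ 1/2 < ∞, so x ↦ f(x) − f(x + π) is in L²(ℝ). -/

import Mathlib

open Real MeasureTheory

noncomputable def aSeq (k : ℤ) : ℝ := if k = 0 then 1 / 4 else 1 / (5 * |(k : ℝ)|)

lemma aSeq_nonneg (k : ℤ) : 0 ≤ aSeq k := by
  unfold aSeq; split <;> positivity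

lemma aSeq_neg (k : ℤ) : aSeq (-k) = aSeq k := by
  unfold aSeq; simp

lemma aSeq_antitone (n : ℕ) : aSeq (n + 1) ≤ aSeq n := by
  unfold aSeq
  rcases Nat.eq_zero_or_pos n with h | h
  · subst h; norm_num
  · have h0 : (n : ℤ) + 1 ≠ 0 := by positivity
    have h1 : (n : ℤ) ≠ 0 := by positivity
    rw [if_neg h0, if_neg h1]
    have hn : (0:ℝ) < (n:ℝ) := by exact_mod_cast h
    push_cast
    rw [abs_of_pos (by linarith), abs_of_pos hn]
    apply one_div_le_one_div_of_le (by linarith)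
    linarith

noncomputable def fCtr : ℝ → ℝ :=
  Set.indicator (⋃ k : ℤ, Set.Icc ((k : ℝ) * π) ((k : ℝ) * π + aSeq k)) 1

/-- the "bad" set where the shift can differ -/
def badSet : Set ℝ :=
  ⋃ j : ℤ, Set.Icc ((j : ℝ) * π + min (aSeq j) (aSeq (j + 1)))
    ((j : ℝ) * π + max (aSeq j) (aSeq (j + 1)))

lemma badSet_measurable : MeasurableSet badSet :=
  MeasurableSet.iUnion fun _ => measurableSet_Icc

lemma shift_mem (x : ℝ) :
    (x + π ∈ ⋃ k : ℤ, Set.Icc ((k : ℝ) * π) ((k : ℝ) * π + aSeq k)) ↔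
      ∃ j : ℤ, x ∈ Set.Icc ((j : ℝ) * π) ((j : ℝ) * π + aSeq (j + 1)) := by
  simp only [Set.mem_iUnion, Set.mem_Icc]
  constructor
  · rintro ⟨k, h1, h2⟩
    refine ⟨k - 1, ?_, ?_⟩ <;> push_cast <;>
 ring_nf <;> ring_nf at h1 h2 <;> linarith
  · rintro ⟨j, h1, h2⟩
    refine ⟨j + 1, ?_, ?_⟩ <;> push_cast <;> ring_nf <;> ring_nf at h1 h2 <;> linarith

lemma key (x : ℝ) (hx : x ∉ badSet) : fCtr x = fCtr (x + π) := by
  unfold fCtr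
  have hmem : (x ∈ ⋃ k : ℤ, Set.Icc ((k : ℝ) * π) ((k : ℝ) * π + aSeq k)) ↔
      (x + π ∈ ⋃ k : ℤ, Set.Icc ((k : ℝ) * π) ((k : ℝ) * π + aSeq k)) := by
    rw [shift_mem]
    simp only [Set.mem_iUnion, Set.mem_Icc]
    constructor
    · rintro ⟨k, h1, h2⟩
      have hle : x ≤ (k : ℝ) * π + min (aSeq k) (aSeq (k + 1)) := by
        by_contra h
        exact hx (Set.mem_iUnion.2 ⟨k, Set.mem_Icc.2 ⟨le_of_lt (not_le.1 h),
          h2.trans (by simp [le_max_left])⟩⟩)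
      exact ⟨k, h1, hle.trans (by simp [min_le_right])⟩
    · rintro ⟨j, h1, h2⟩
      have hle : x ≤ (j : ℝ) * π + min (aSeq j) (aSeq (j + 1)) := by
        by_contra h
        exact hx (Set.mem_iUnion.2 ⟨j, Set.mem_Icc.2 ⟨le_of_lt (not_le.1 h),
          h2.trans (by simp [le_max_right])⟩⟩)
      exact ⟨j, h1, hle.trans (by simp [min_le_left])⟩
  by_cases h : x ∈ ⋃ k : ℤ, Set.Icc ((k : ℝ) * π) ((k : ℝ) * π + aSeq k)
  · rw [Set.indicator_of_mem h, Set.indicator_of_mem (hmem.1 h)]; simp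
  · rw [Set.indicator_of_notMem h, Set.indicator_of_notMem (fun hc => h (hmem.2 hc))]

lemma aSeq_le_quarter (k : ℤ) : aSeq k ≤ 1 / 4 := by
  unfold aSeq
  split
  · exact le_refl _
  · rename_i h
    have h1 : (1:ℝ) ≤ |(k:ℝ)| := by
      rw [← Int.cast_abs]; exact_mod_cast Int.one_le_abs (by omega)
    calc 1 / (5 * |(k:ℝ)|) ≤ 1 / 5 := by
          apply one_div_le_one_div_of_le (by norm_num); linarith
      _ ≤ 1 / 4 := by norm_num

noncomputable def AN : ℕ → ℝ := fun n => aSeq (n : ℤ)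

lemma AN_antitone (n : ℕ) : AN (n + 1) ≤ AN n := by
  have := aSeq_antitone n
  simpa [AN] using this

lemma tsum_nat_le : (∑' n : ℕ, ENNReal.ofReal (AN n - AN (n + 1))) ≤ ENNReal.ofReal (1 / 4) := by
  apply ENNReal.tsum_le_of_sum_range_le
  intro N
  rw [← ENNReal.ofReal_sum_of_nonneg (fun i _ => sub_nonneg.2 (AN_antitone i))]
  apply ENNReal.ofReal_le_ofReal
  rw [Finset.sum_range_sub' AN N]
  have h0 : AN 0 = 1 / 4 := by simp [AN, aSeq]
  have := aSeq_nonneg (N : ℤ)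
  simp only [AN, h0] at *
  linarith

lemma volume_badSet_le : volume badSet ≤ ENNReal.ofReal (1 / 2) := by
  have h1 : volume badSet ≤ ∑' j : ℤ, ENNReal.ofReal (|aSeq j - aSeq (j + 1)|) := by
    refine (measure_iUnion_le _).trans ?_
    apply ENNReal.tsum_le_tsum
    intro j
    rw [Real.volume_Icc]
    apply ENNReal.ofReal_le_ofReal
    rw [add_sub_add_left_eq_sub, max_sub_min_eq_abs, abs_sub_comm]
  refine h1.trans ?_
  rw [tsum_of_nat_of_neg_add_one ENNReal.summable ENNReal.summable]
  have hnat : ∀ n : ℕ, ENNReal.ofReal (|aSeq (n : ℤ) - aSeq ((n : ℤ) + 1)|) =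
      ENNReal.ofReal (AN n - AN (n + 1)) := by
    intro n
    rw [abs_of_nonneg (sub_nonneg.2 (aSeq_antitone n))]
    congr 1
  have hneg : ∀ n : ℕ, ENNReal.ofReal (|aSeq (-((n : ℤ) + 1)) - aSeq (-((n : ℤ) + 1) + 1)|) =
      ENNReal.ofReal (AN n - AN (n + 1)) := by
    intro n
    have e1 : -((n : ℤ) + 1) + 1 = -(n : ℤ) := by ring
    rw [e1, aSeq_neg, aSeq_neg, abs_sub_comm,
      abs_of_nonneg (sub_nonneg.2 (aSeq_antitone n))]
    congr 1
  calc (∑' n : ℕ, ENNReal.ofReal (|aSeq (n : ℤ) - aSeq ((n : ℤ) + 1)|)) +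
        ∑' n : ℕ, ENNReal.ofReal (|aSeq (-((n : ℤ) + 1)) - aSeq (-((n : ℤ) + 1) + 1)|)
      = (∑' n : ℕ, ENNReal.ofReal (AN n - AN (n + 1))) +
        ∑' n : ℕ, ENNReal.ofReal (AN n - AN (n + 1)) := by
        rw [tsum_congr hnat, tsum_congr hneg]
    _ ≤ ENNReal.ofReal (1 / 4) + ENNReal.ofReal (1 / 4) := add_le_add tsum_nat_le tsum_nat_le
    _ = ENNReal.ofReal (1 / 2) := by
        rw [← ENNReal.ofReal_add (by norm_num) (by norm_num)]; norm_num

lemma fCtr_vals (y : ℝ) : fCtr y = 0 ∨ fCtr y = 1 := by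
  unfold fCtr
  by_cases h : y ∈ ⋃ k : ℤ, Set.Icc ((k : ℝ) * π) ((k : ℝ) * π + aSeq k)
  · right; rw [Set.indicator_of_mem h]; rfl
  · left; exact Set.indicator_of_notMem h _

theorem fCtr_shift_L2 :
    (∫⁻ x : ℝ, ENNReal.ofReal (|fCtr x - fCtr (x + π)| ^ 2)) ≤ ENNReal.ofReal (1 / 2) ∧
    MemLp (fun x => fCtr x - fCtr (x + π)) 2 volume := by
  have hS : MeasurableSet (⋃ k : ℤ, Set.Icc ((k : ℝ) * π) ((k : ℝ) * π + aSeq k)) :=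
    MeasurableSet.iUnion fun _ => measurableSet_Icc
  have hfm : Measurable fCtr := measurable_one.indicator hS
  have hm : Measurable fun x => fCtr x - fCtr (x + π) :=
    hfm.sub (hfm.comp (measurable_id.add_const π))
  have habs : ∀ x : ℝ, |fCtr x - fCtr (x + π)| ≤ 1 := by
    intro x
    rcases fCtr_vals x with h | h <;> rcases fCtr_vals (x + π) with h' | h' <;>
      rw [h, h'] <;> norm_num
  have hpt : ∀ x : ℝ, ENNReal.ofReal (|fCtr x - fCtr (x + π)| ^ 2) ≤
      badSet.indicator (fun _ => (1 : ENNReal)) x := by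
    intro x
    by_cases hx : x ∈ badSet
    · rw [Set.indicator_of_mem hx]
      calc ENNReal.ofReal (|fCtr x - fCtr (x + π)| ^ 2) ≤ ENNReal.ofReal 1 := by
            apply ENNReal.ofReal_le_ofReal
            have := habs x
            have h0 := abs_nonneg (fCtr x - fCtr (x + π))
            nlinarith
        _ = 1 := ENNReal.ofReal_one
    · rw [Set.indicator_of_notMem hx, key x hx]
      simp
  have hint : (∫⁻ x : ℝ, ENNReal.ofReal (|fCtr x - fCtr (x + π)| ^ 2)) ≤
      ENNReal.ofReal (1 / 2) := by
    calc (∫⁻ x : ℝ, ENNReal.ofReal (|fCtr x - fCtr (x + π)| ^ 2))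
        ≤ ∫⁻ x : ℝ, badSet.indicator (fun _ => (1 : ENNReal)) x := lintegral_mono hpt
      _ = volume badSet := lintegral_indicator_one badSet_measurable
      _ ≤ ENNReal.ofReal (1 / 2) := volume_badSet_le
  refine ⟨hint, hm.aestronglyMeasurable, ?_⟩
  rw [eLpNorm_eq_lintegral_rpow_enorm_toReal (by norm_num) (by norm_num)]
  have heq : ∀ x : ℝ, (‖fCtr x - fCtr (x + π)‖ₑ) ^ ((2 : ENNReal).toReal) =
      ENNReal.ofReal (|fCtr x - fCtr (x + π)| ^ 2) := by
    intro x
    rw [Real.enorm_eq_ofReal_abs, show ((2 : ENNReal).toReal) = (2 : ℝ) by simp,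
      show (2 : ℝ) = ((2 : ℕ) : ℝ) by norm_num, ENNReal.rpow_natCast,
      ← ENNReal.ofReal_pow (abs_nonneg _)]
  rw [lintegral_congr heq]
  apply ENNReal.rpow_lt_top_of_nonneg (by positivity)
  exact ne_of_lt (lt_of_le_of_lt hint ENNReal.ofReal_lt_top)
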